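/- In the setting of the previous statement, if additionally H₀ carries an orthogonal complex structure J with J² = -Id and SJ = -JS, and L is a Lagrangian subspace of H₀ (JL = L^⊥), then the limit L_∞ = lim_{r→∞} e^{-rS} L is again a Lagrangian subspace of H₀. -/

import Mathlib

open scoped RealInnerProductSpace

set_option maxHeartbeats 1000000
set_option synthInstance.maxHeartbeats 400000

variable {H0 : Type*} [NormedAddCommGroup H0] [InnerProductSpace ℝ H0]
  [FiniteDimensional ℝ H0]

/-- The orthogonal projection onto a subspace, as an endomorphism of `H0`. -/
noncomputable def projCLM (K : Submodule ℝ H0) : H0 →L[ℝ] H0 :=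
  K.subtypeL.comp K.orthogonalProjectionOnto

lemma projCLM_apply (K : Submodule ℝ H0) (x : H0) :
    projCLM K x = (K.orthogonalProjectionOnto x : H0) := rfl

lemma eq_of_projCLM_eq {K₁ K₂ : Submodule ℝ H0} (h : projCLM K₁ = projCLM K₂) : K₁ = K₂ := by
  ext x
  rw [← Submodule.starProjection_eq_self_iff (K := K₁), ← Submodule.starProjection_eq_self_iff (K := K₂)]
  show projCLM K₁ x = x ↔ projCLM K₂ x = x
  rw [h]

lemma projCLM_orthogonal (K : Submodule ℝ H0) : projCLM Kᗮ = 1 - projCLM K := by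
  ext x
  simp [projCLM_apply, Submodule.starProjection_orthogonal_val]

lemma projCLM_map_J (J : H0 →L[ℝ] H0) (hJ2 : ∀ x, J (J x) = -x)
    (hJorth : ∀ x y : H0, ⟪J x, J y⟫ = ⟪x, y⟫) (K : Submodule ℝ H0) :
    projCLM (Submodule.map (J : H0 →ₗ[ℝ] H0) K) = J ∘L projCLM K ∘L (-J) := by
  ext x
  show (Submodule.map (J : H0 →ₗ[ℝ] H0) K).starProjection x = J (projCLM K (-(J x)))
  apply Submodule.eq_starProjection_of_mem_of_inner_eq_zero
  · exact Submodule.mem_map_of_mem (K.orthogonalProjectionOnto (-(J x))).2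
  · rintro w ⟨k, hk, rfl⟩
    have hx : x = J (-(J x)) := by rw [map_neg, hJ2, neg_neg]
    rw [projCLM_apply]
    calc ⟪x - J (K.orthogonalProjectionOnto (-(J x)) : H0), J k⟫
        = ⟪J (-(J x) - (K.orthogonalProjectionOnto (-(J x)) : H0)), J k⟫ := by
          rw [map_sub, ← hx]
      _ = ⟪-(J x) - (K.orthogonalProjectionOnto (-(J x)) : H0), k⟫ := hJorth _ _
      _ = 0 := Submodule.starProjection_inner_eq_zero _ _ hk

lemma map_orthogonal_of_selfAdjoint {T T' : H0 →L[ℝ] H0} (hT : IsSelfAdjoint T)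
    (hTT' : ∀ x, T (T' x) = x) (hT'T : ∀ x, T' (T x) = x) (L : Submodule ℝ H0) :
    (Submodule.map (T : H0 →ₗ[ℝ] H0) L)ᗮ = Submodule.map (T' : H0 →ₗ[ℝ] H0) Lᗮ := by
  have hsym := hT.isSymmetric
  ext y
  constructor
  · intro h
    rw [Submodule.mem_orthogonal] at h
    refine Submodule.mem_map.mpr ⟨T y, ?_, hT'T y⟩
    rw [Submodule.mem_orthogonal]
    intro l hl
    have := hsym l y
    simp only [ContinuousLinearMap.coe_coe] at this
    rw [← this]
    exact h _ (Submodule.mem_map_of_mem hl)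
  · intro hy
    obtain ⟨z, hz, rfl⟩ := Submodule.mem_map.mp hy
    rw [Submodule.mem_orthogonal]
    intro u hu
    obtain ⟨l, hl, rfl⟩ := Submodule.mem_map.mp hu
    have := hsym l (T' z)
    simp only [ContinuousLinearMap.coe_coe] at this
    rw [ContinuousLinearMap.coe_coe, ContinuousLinearMap.coe_coe, this, hTT']
    exact (Submodule.mem_orthogonal _ _).mp hz l hl

omit [FiniteDimensional ℝ H0] in
lemma map_map_clm (f g : H0 →L[ℝ] H0) (L : Submodule ℝ H0) :
    Submodule.map (f : H0 →ₗ[ℝ] H0) (Submodule.map (g : H0 →ₗ[ℝ] H0) L) = Submodule.map ((f ∘L g : H0 →L[ℝ] H0) : H0 →ₗ[ℝ] H0) L := by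
  ext x
  simp only [Submodule.mem_map, ContinuousLinearMap.coe_comp', Function.comp_apply]
  constructor
  · rintro ⟨y, ⟨z, hz, rfl⟩, rfl⟩; exact ⟨z, hz, rfl⟩
  · rintro ⟨z, hz, rfl⟩; exact ⟨g z, ⟨z, hz, rfl⟩, rfl⟩

/-- If the finite-dimensional inner product space `H0` carries an orthogonal complex
structure `J` with `J² = -Id` and `SJ = -JS`, and `L` is a Lagrangian subspace, then the
adiabatic limit `L_∞ = lim_{r→∞} e^{-rS} L` (limit in the Grassmannian, i.e. of orthogonal
projections) is again Lagrangian. -/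
theorem adiabatic_limit_lagrangian
    (S : H0 →L[ℝ] H0) (hS : IsSelfAdjoint S)
    (J : H0 →L[ℝ] H0) (hJ2 : ∀ x, J (J x) = -x)
    (hJorth : ∀ x y : H0, ⟪J x, J y⟫ = ⟪x, y⟫)
    (hSJ : ∀ x, S (J x) = -J (S x))
    (L : Submodule ℝ H0) (hLag : Submodule.map (J : H0 →ₗ[ℝ] H0) L = Lᗮ)
    (Linf : Submodule ℝ H0)
    (hlim : Filter.Tendsto
      (fun r : ℝ => projCLM (Submodule.map ((NormedSpace.exp (-(r • S)) : H0 →L[ℝ] H0) : H0 →ₗ[ℝ] H0) L))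
      Filter.atTop (nhds (projCLM Linf))) :
    Submodule.map (J : H0 →ₗ[ℝ] H0) Linf = Linfᗮ := by
  letI : NormedAlgebra ℚ (H0 →L[ℝ] H0) := NormedAlgebra.restrictScalars ℚ ℝ _
  have hJJ : J * J = -1 := by ext x; exact hJ2 x
  set Ju : (H0 →L[ℝ] H0)ˣ :=
    ⟨J, -J, by rw [mul_neg, hJJ, neg_neg], by rw [neg_mul, hJJ, neg_neg]⟩ with hJu
  -- each L_r is Lagrangian
  have key : ∀ r : ℝ,
      Submodule.map (J : H0 →ₗ[ℝ] H0) (Submodule.map ((NormedSpace.exp (-(r • S)) : H0 →L[ℝ] H0) : H0 →ₗ[ℝ] H0) L)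
        = (Submodule.map ((NormedSpace.exp (-(r • S)) : H0 →L[ℝ] H0) : H0 →ₗ[ℝ] H0) L)ᗮ := by
    intro r
    set A := r • S with hA
    have hAsym : (A : H0 →ₗ[ℝ] H0).IsSymmetric := by
      intro x y
      have := hS.isSymmetric x y
      simp only [ContinuousLinearMap.coe_coe] at this ⊢
      show ⟪r • S x, y⟫ = ⟪x, r • S y⟫
      rw [inner_smul_left, inner_smul_right, this]
      norm_num
    have hconj : A = (Ju : H0 →L[ℝ] H0) * (-A) * ((Ju⁻¹ : (H0 →L[ℝ] H0)ˣ) : H0 →L[ℝ] H0) := by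
      show A = J * (-A) * (-J)
      ext x
      simp only [ContinuousLinearMap.mul_apply, ContinuousLinearMap.neg_apply, map_neg,
        neg_neg, hA, ContinuousLinearMap.smul_apply, hSJ, map_smul, hJ2, smul_neg]
    have hexpconj : NormedSpace.exp A = J * NormedSpace.exp (-A) * (-J) := by
      conv_lhs => rw [hconj]
      rw [NormedSpace.exp_units_conj]
      rfl
    have hEJ' : J ∘L NormedSpace.exp (-A) = NormedSpace.exp A ∘L J := by
      have : NormedSpace.exp A * J = J * NormedSpace.exp (-A) := by
        rw [hexpconj, mul_assoc, neg_mul, hJJ, neg_neg, mul_one]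
      exact this.symm
    have hinv1 : ∀ x, (NormedSpace.exp (-A)) ((NormedSpace.exp A) x) = x := by
      intro x
      have : NormedSpace.exp (-A) * NormedSpace.exp A = 1 := by
        rw [← NormedSpace.exp_add_of_commute (Commute.refl A).neg_left, neg_add_cancel,
          NormedSpace.exp_zero]
      exact DFunLike.congr_fun this x
    have hinv2 : ∀ x, (NormedSpace.exp A) ((NormedSpace.exp (-A)) x) = x := by
      intro x
      have : NormedSpace.exp A * NormedSpace.exp (-A) = 1 := by
        rw [← NormedSpace.exp_add_of_commute (Commute.refl A).neg_right, add_neg_cancel,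
          NormedSpace.exp_zero]
      exact DFunLike.congr_fun this x
    have hTsa : IsSelfAdjoint (NormedSpace.exp (-A)) :=
      (hAsym.isSelfAdjoint.neg).exp
    calc Submodule.map (J : H0 →ₗ[ℝ] H0) (Submodule.map ((NormedSpace.exp (-A) : H0 →L[ℝ] H0) : H0 →ₗ[ℝ] H0) L)
        = Submodule.map ((J ∘L NormedSpace.exp (-A) : H0 →L[ℝ] H0) : H0 →ₗ[ℝ] H0) L := map_map_clm _ _ _
      _ = Submodule.map ((NormedSpace.exp A ∘L J : H0 →L[ℝ] H0) : H0 →ₗ[ℝ] H0) L := by rw [hEJ']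
      _ = Submodule.map ((NormedSpace.exp A : H0 →L[ℝ] H0) : H0 →ₗ[ℝ] H0) (Submodule.map (J : H0 →ₗ[ℝ] H0) L) := (map_map_clm _ _ _).symm
      _ = (Submodule.map ((NormedSpace.exp (-A) : H0 →L[ℝ] H0) : H0 →ₗ[ℝ] H0) L)ᗮ := by
          rw [hLag, map_orthogonal_of_selfAdjoint hTsa hinv1 hinv2]
  -- pass to the limit
  set P : ℝ → (H0 →L[ℝ] H0) := fun r => projCLM (Submodule.map ((NormedSpace.exp (-(r • S)) : H0 →L[ℝ] H0) : H0 →ₗ[ℝ] H0) L)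
    with hP
  have heq : ∀ r : ℝ, J ∘L P r ∘L (-J) = 1 - P r := by
    intro r
    rw [hP]
    dsimp only
    rw [← projCLM_map_J J hJ2 hJorth, key r, projCLM_orthogonal]
  have hlim1 : Filter.Tendsto (fun r => J ∘L P r ∘L (-J)) Filter.atTop
      (nhds (J ∘L projCLM Linf ∘L (-J))) := by
    have hc : Continuous (fun Q : H0 →L[ℝ] H0 => J ∘L Q ∘L (-J)) := by
      have h1 : (fun Q : H0 →L[ℝ] H0 => J ∘L Q ∘L (-J)) = fun Q => J * Q * (-J) := rfl
      rw [h1]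
      exact (continuous_mul_right (-J)).comp (continuous_mul_left J)
    exact hc.continuousAt.tendsto.comp hlim
  have hlim2 : Filter.Tendsto (fun r => (1 : H0 →L[ℝ] H0) - P r) Filter.atTop
      (nhds (1 - projCLM Linf)) := (tendsto_const_nhds).sub hlim
  have hfin : J ∘L projCLM Linf ∘L (-J) = 1 - projCLM Linf := by
    have : (fun r => J ∘L P r ∘L (-J)) = fun r => (1 : H0 →L[ℝ] H0) - P r := funext heq
    exact tendsto_nhds_unique (this ▸ hlim1) hlim2
  apply eq_of_projCLM_eq
  rw [projCLM_map_J J hJ2 hJorth, projCLM_orthogonal, hfin]
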